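/- Let r ≥ 1 and let a = (a_1, …, a_r) ∈ ℤ^r satisfy q(a) = 1, where q is the integral quadratic form corresponding to the Dynkin diagram A_r. Then there exist a sign ε ∈ {1, −1} and indices 1 ≤ j ≤ k ≤ r such that a_i = ε for all j ≤ i ≤ k and a_i = 0 for all other i. In other words, up to sign a is the indicator vector of a nonempty interval of consecutive indices. -/

import Mathlib

lemma sum_sq_sub' (n : ℕ) (c : ℕ → ℤ) :
    ∑ i ∈ Finset.range n, (c i - c (i+1))^2 =
      (∑ i ∈ Finset.range n, (c i)^2) + (∑ i ∈ Finset.range n, (c (i+1))^2)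
        - 2 * ∑ i ∈ Finset.range n, c i * c (i+1) := by
  rw [Finset.mul_sum, ← Finset.sum_add_distrib, ← Finset.sum_sub_distrib]
  exact Finset.sum_congr rfl fun i _ => by ring

/-- If `q(a) = 1` for the quadratic form `q` of Dynkin type `A_r`
(with `a` indexed `1, …, r`), then up to sign `a` is the indicator vector of a
nonempty interval of consecutive indices. -/
theorem stmt_0 (r : ℕ) (hr : 1 ≤ r) (a : ℕ → ℤ)
    (hq : (∑ i ∈ Finset.Icc 1 r, (a i) ^ 2)
        - (∑ i ∈ Finset.Icc 1 (r - 1), a i * a (i + 1)) = 1) :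
    ∃ ε : ℤ, (ε = 1 ∨ ε = -1) ∧ ∃ j k : ℕ, 1 ≤ j ∧ j ≤ k ∧ k ≤ r ∧
      ∀ i : ℕ, 1 ≤ i → i ≤ r → a i = if j ≤ i ∧ i ≤ k then ε else 0 := by
  obtain ⟨s, rfl⟩ : ∃ s, r = s + 1 := ⟨r - 1, by omega⟩
  set r := s + 1 with hrdef
  set b : ℕ → ℤ := fun i => if 1 ≤ i ∧ i ≤ r then a i else 0 with hb
  have hb0 : b 0 = 0 := by simp [hb]
  have hbr1 : b (r + 1) = 0 := by simp [hb]
  have hbi : ∀ i, 1 ≤ i → i ≤ r → b i = a i := fun i h1 h2 => by simp [hb, h1, h2]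
  set d : ℕ → ℤ := fun j => b j - b (j + 1) with hd
  -- the three sum computations
  have h1 : ∑ i ∈ Finset.range (r+1), (b i)^2 = ∑ i ∈ Finset.Icc 1 r, (a i)^2 := by
    rw [Finset.sum_range_succ' (fun i => (b i)^2) r, hb0, ← Finset.Ico_add_one_right_eq_Icc,
      Finset.sum_Ico_eq_sum_range, Nat.add_sub_cancel,
      show ((0:ℤ))^2 = 0 by ring, add_zero]
    exact Finset.sum_congr rfl fun i hi => by
      rw [Finset.mem_range] at hi
      rw [hbi (i+1) (by omega) (by omega)]
      ring_nf
  have h2 : ∑ i ∈ Finset.range (r+1), (b (i+1))^2 = ∑ i ∈ Finset.Icc 1 r, (a i)^2 := by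
    rw [Finset.sum_range_succ (fun i => (b (i+1))^2) r, hbr1, ← Finset.Ico_add_one_right_eq_Icc,
      Finset.sum_Ico_eq_sum_range, Nat.add_sub_cancel,
      show ((0:ℤ))^2 = 0 by ring, add_zero]
    exact Finset.sum_congr rfl fun i hi => by
      rw [Finset.mem_range] at hi
      rw [hbi (i+1) (by omega) (by omega)]
      ring_nf
  have h3 : ∑ i ∈ Finset.range (r+1), b i * b (i+1)
      = ∑ i ∈ Finset.Icc 1 (r-1), a i * a (i+1) := by
    rw [Finset.sum_range_succ' (fun i => b i * b (i+1)) r, hb0,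
      Finset.sum_range_succ (fun i => b (i+1) * b (i+1+1)) s, hbr1,
      ← Finset.Ico_add_one_right_eq_Icc, Finset.sum_Ico_eq_sum_range]
    have hs : r - 1 + 1 - 1 = s := by omega
    rw [hs, zero_mul, mul_zero, add_zero, add_zero]
    exact Finset.sum_congr rfl fun i hi => by
      rw [Finset.mem_range] at hi
      rw [hbi (i+1) (by omega) (by omega), hbi (i+1+1) (by omega) (by omega)]
      ring_nf
  have key : ∑ i ∈ Finset.range (r+1), (d i)^2 = 2 := by
    have := sum_sq_sub' (r+1) b
    simp only [hd]
    rw [this, h1, h2, h3]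
    linarith
  -- each d i has square ≤ 2, hence |d i| ≤ 1
  have hdsq : ∀ i ∈ Finset.range (r+1), (d i)^2 ≤ 2 := by
    intro i hi
    calc (d i)^2 ≤ ∑ j ∈ Finset.range (r+1), (d j)^2 :=
          Finset.single_le_sum (fun j _ => sq_nonneg (d j)) hi
      _ = 2 := key
  have hdone : ∀ i ∈ Finset.range (r+1), d i ≠ 0 → d i = 1 ∨ d i = -1 := by
    intro i hi hne
    have h := hdsq i hi
    have habs : 1 ≤ |d i| := by
      rcases hne.lt_or_gt with h' | h'
      · rw [abs_of_neg h']; omega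
      · rw [abs_of_pos h']; omega
    have h2' : |d i| ≤ 1 := by
      by_contra hcon
      push_neg at hcon
      nlinarith [sq_abs (d i), abs_nonneg (d i)]
    exact (abs_eq (by norm_num : (0:ℤ) ≤ 1)).mp (le_antisymm h2' habs)
  -- telescoping : total sum of d is 0
  have htel : ∀ n, ∑ j ∈ Finset.range n, d j = b 0 - b n := by
    intro n
    simpa [hd] using Finset.sum_range_sub' b n
  have hsum0 : ∑ j ∈ Finset.range (r+1), d j = 0 := by
    rw [htel, hb0, hbr1]; ring
  -- the support has exactly two elements
  set S : Finset ℕ := (Finset.range (r+1)).filter (fun j => d j ≠ 0) with hS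
  have hout : ∀ x ∈ Finset.range (r+1), x ∉ S → d x = 0 := by
    intro x hx hnx
    by_contra h0
    exact hnx (Finset.mem_filter.mpr ⟨hx, h0⟩)
  have hSsum : ∑ j ∈ S, (d j)^2 = 2 :=
    calc ∑ j ∈ S, (d j)^2 = ∑ j ∈ Finset.range (r+1), (d j)^2 :=
          Finset.sum_subset (Finset.filter_subset _ _)
            (fun x hx hnx => by rw [hout x hx hnx]; ring)
      _ = 2 := key
  have hScard : S.card = 2 := by
    have hone : ∀ j ∈ S, (d j)^2 = 1 := by
      intro j hj
      rw [hS, Finset.mem_filter] at hj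
      rcases hdone j hj.1 hj.2 with h | h <;> rw [h] <;> ring
    have : ∑ j ∈ S, (d j)^2 = (S.card : ℤ) := by
      rw [Finset.sum_congr rfl hone]; simp
    rw [hSsum] at this
    omega
  obtain ⟨x, y, hxy, hSxy⟩ := Finset.card_eq_two.mp hScard
  set p := min x y with hp
  set q := max x y with hq'
  have hpq : p < q := min_lt_max.mpr hxy
  have hSpq : S = {p, q} := by
    rcases le_total x y with h | h
    · rw [hSxy, hp, hq', min_eq_left h, max_eq_right h]
    · rw [hSxy, hp, hq', min_eq_right h, max_eq_left h, Finset.pair_comm]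
  have hpS : p ∈ S := by rw [hSpq]; simp
  have hqS : q ∈ S := by rw [hSpq]; simp
  have hpS' := Finset.mem_filter.mp (hS ▸ hpS)
  have hqS' := Finset.mem_filter.mp (hS ▸ hqS)
  have hqr : q ≤ r := by have := Finset.mem_range.mp hqS'.1; omega
  have hdp : d p = 1 ∨ d p = -1 := hdone p hpS'.1 hpS'.2
  -- d p + d q = 0
  have hdpq : d p + d q = 0 := by
    have : ∑ j ∈ S, d j = 0 :=
      calc ∑ j ∈ S, d j = ∑ j ∈ Finset.range (r+1), d j :=
            Finset.sum_subset (Finset.filter_subset _ _) hout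
        _ = 0 := hsum0
    rw [hSpq, Finset.sum_pair (by omega)] at this
    exact this
  -- pointwise description of d
  have hpoint : ∀ j, j < r + 1 →
      d j = (if j = p then d p else 0) + (if j = q then d q else 0) := by
    intro j hj
    by_cases h0 : d j = 0
    · have hjp : j ≠ p := fun h => hpS'.2 (h ▸ h0)
      have hjq : j ≠ q := fun h => hqS'.2 (h ▸ h0)
      simp [hjp, hjq, h0]
    · have : j ∈ S := by rw [hS, Finset.mem_filter]; exact ⟨Finset.mem_range.mpr hj, h0⟩
      rw [hSpq] at this
      simp only [Finset.mem_insert, Finset.mem_singleton] at this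
      rcases this with h | h
      · subst h; rw [if_pos rfl, if_neg (by omega : ¬ p = q), add_zero]
      · subst h; rw [if_neg (by omega : ¬ q = p), if_pos rfl, zero_add]
  -- value of b
  have hbval : ∀ i, i ≤ r →
      b i = -((if p < i then d p else 0) + (if q < i then d q else 0)) := by
    intro i hi
    have h1 : ∑ j ∈ Finset.range i, d j
        = (if p < i then d p else 0) + (if q < i then d q else 0) := by
      rw [Finset.sum_congr rfl (fun j hj => hpoint j (by
        have := Finset.mem_range.mp hj; omega)), Finset.sum_add_distrib,
        Finset.sum_ite_eq' (Finset.range i) p (fun _ => d p),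
        Finset.sum_ite_eq' (Finset.range i) q (fun _ => d q)]
      simp [Finset.mem_range]
    have h2 := htel i
    rw [h1, hb0] at h2
    linarith
  refine ⟨-d p, ?_, p + 1, q, by omega, by omega, hqr, ?_⟩
  · rcases hdp with h | h
    · right; rw [h]
    · left; rw [h]; ring
  · intro i h1 h2
    rw [← hbi i h1 h2, hbval i h2]
    split_ifs <;> omega
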